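/- Let n ≥ 1 be a natural number, y, γ ∈ ℝ, and define ν(p) = n(n+5)/2 + tanh(p)·n(n+3)/2 + 1. Then the function U(p) = −(1/2)·|y − γ|·log((n² + 3n)/(n² + 4n + 1 − ν(p)) − 1) has derivative at every p ∈ ℝ equal to −|y − γ|. In particular the gradient of U with respect to p does not vanish as p → −∞ whenever y ≠ γ. -/

import Mathlib

open Real

/-- Degrees-of-freedom parameter produced via the tanh activation. -/
noncomputable def nuParam (n : ℕ) (p : ℝ) : ℝ :=
  (n : ℝ) * (n + 5) / 2 + Real.tanh p * ((n : ℝ) * (n + 3) / 2) + 1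

lemma key_arg (n : ℕ) (hn : 1 ≤ n) (p : ℝ) :
    ((n : ℝ) ^ 2 + 3 * n) / ((n : ℝ) ^ 2 + 4 * n + 1 - nuParam n p) - 1
      = Real.exp (2 * p) := by
  have hn1 : (1 : ℝ) ≤ (n : ℝ) := by exact_mod_cast hn
  have hA : (0 : ℝ) < (n : ℝ) ^ 2 + 3 * n := by nlinarith
  have hc : 0 < Real.cosh p := Real.cosh_pos p
  have hden : (n : ℝ) ^ 2 + 4 * n + 1 - nuParam n p
      = ((n : ℝ) ^ 2 + 3 * n) * Real.exp (-p) / (2 * Real.cosh p) := by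
    have h : Real.exp (-p) = Real.cosh p - Real.sinh p := (Real.cosh_sub_sinh p).symm
    unfold nuParam
    rw [Real.tanh_eq_sinh_div_cosh]
    field_simp
    linear_combination (-(3 * (n:ℝ) + (n:ℝ)^2)) * h
  rw [hden]
  have he : (0 : ℝ) < Real.exp (-p) := Real.exp_pos _
  rw [Real.cosh_eq]
  rw [div_div_eq_mul_div, div_sub' (mul_pos hA he).ne']
  rw [div_eq_iff (mul_pos hA he).ne']
  have h2 : Real.exp (2 * p) * Real.exp (-p) = Real.exp p := by
    rw [← Real.exp_add]; ring_nf
  nlinarith [h2, hA, he]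

theorem stmt_10 (n : ℕ) (hn : 1 ≤ n) (y γ : ℝ) :
    (∀ p : ℝ,
      HasDerivAt
        (fun p : ℝ => -(1 / 2) * |y - γ| *
          Real.log (((n : ℝ) ^ 2 + 3 * n) / ((n : ℝ) ^ 2 + 4 * n + 1 - nuParam n p) - 1))
        (-|y - γ|) p)
    ∧ (y ≠ γ → ∀ p : ℝ,
        deriv
          (fun p : ℝ => -(1 / 2) * |y - γ| *
            Real.log (((n : ℝ) ^ 2 + 3 * n) / ((n : ℝ) ^ 2 + 4 * n + 1 - nuParam n p) - 1))
          p ≠ 0) := by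
  have feq : (fun p : ℝ => -(1 / 2) * |y - γ| *
      Real.log (((n : ℝ) ^ 2 + 3 * n) / ((n : ℝ) ^ 2 + 4 * n + 1 - nuParam n p) - 1))
      = fun p : ℝ => -|y - γ| * p := by
    funext q
    rw [key_arg n hn q, Real.log_exp]
    ring
  have hmain : ∀ p : ℝ,
      HasDerivAt
        (fun p : ℝ => -(1 / 2) * |y - γ| *
          Real.log (((n : ℝ) ^ 2 + 3 * n) / ((n : ℝ) ^ 2 + 4 * n + 1 - nuParam n p) - 1))
        (-|y - γ|) p := by
    intro p
    rw [feq]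
    simpa using (hasDerivAt_id p).const_mul (-|y - γ|)
  refine ⟨hmain, fun hne p => ?_⟩
  rw [(hmain p).deriv]
  simpa using sub_ne_zero.mpr hne
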